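/- Let S be a commutative semiring and 𝔪 an ideal of S. Then 𝔪 is a z-maximal ideal (a proper z-ideal maximal among proper z-ideals) if and only if 𝔪 is a maximal ideal of S. -/
import Mathlib


/-- An ideal `I` of a commutative semiring is a *z-ideal* if for every `x ∈ I`,
the intersection of all maximal ideals containing `x` is contained in `I`. -/
def IsZIdeal {S : Type*} [CommSemiring S] (I : Ideal S) : Prop :=
  ∀ x ∈ I, sInf {m : Ideal S | m.IsMaximal ∧ x ∈ m} ≤ I

lemma maximal_isZIdeal {S : Type*} [CommSemiring S] (M : Ideal S) (hM : M.IsMaximal) :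
    IsZIdeal M := fun x hx => sInf_le ⟨hM, hx⟩

theorem zMaximal_iff_maximal {S : Type*} [CommSemiring S] (m : Ideal S) :
    (IsZIdeal m ∧ m ≠ ⊤ ∧ ∀ n : Ideal S, IsZIdeal n → n ≠ ⊤ → ¬ m < n) ↔ m.IsMaximal := by
  constructor
  · rintro ⟨hz, hne, hmax⟩
    obtain ⟨M, hM, hle⟩ := Ideal.exists_le_maximal m hne
    have : ¬ m < M := hmax M (maximal_isZIdeal M hM) hM.ne_top
    have : m = M := le_antisymm hle (by by_contra h; exact this (lt_of_le_of_ne hle (fun e => h (e ▸ le_refl _))))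
    exact this ▸ hM
  · intro hM
    refine ⟨maximal_isZIdeal m hM, hM.ne_top, fun n _ hn hlt => hn ?_⟩
    exact hM.1.2 n hlt
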